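/- A connected bipartite graph G is 2-self-centered (every vertex has eccentricity exactly 2) if and only if G is isomorphic to a complete bipartite graph K_{n,m} with n, m ≥ 2. -/

import Mathlib

open SimpleGraph

variable {V : Type*}

/-- Eccentricity of a vertex: maximum distance to any vertex. -/
noncomputable def gEcc [Fintype V] (G : SimpleGraph V) (v : V) : ℕ :=
  Finset.univ.sup fun u => G.dist v u

/-- Radius: minimum eccentricity. -/
noncomputable def gRad [Fintype V] [Nonempty V] (G : SimpleGraph V) : ℕ :=
  Finset.univ.inf' Finset.univ_nonempty fun v => gEcc G v

/-- Diameter: maximum eccentricity. -/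
noncomputable def gDiam [Fintype V] (G : SimpleGraph V) : ℕ :=
  Finset.univ.sup fun v => gEcc G v

/-- Center: vertices of minimum eccentricity. -/
def gCenter [Fintype V] [Nonempty V] (G : SimpleGraph V) : Set V :=
  {v | gEcc G v = gRad G}

/-- A labeling with labels in `Fin r` is distinguishing if the only
label-preserving automorphism is the identity. -/
def IsDistinguishing (G : SimpleGraph V) {r : ℕ} (f : V → Fin r) : Prop :=
  ∀ φ : G ≃g G, (∀ v, f (φ v) = f v) → ∀ v, φ v = v

/-- The distinguishing number: least `r` admitting an `r`-distinguishing labeling. -/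
noncomputable def distinguishingNumber (G : SimpleGraph V) : ℕ :=
  sInf {r | ∃ f : V → Fin r, IsDistinguishing G f}

/-- Core lemma: if adjacency is "different class" and each class has a mate
and the opposite class is nonempty, then every eccentricity is 2. -/
lemma ecc_eq_two [Fintype V] (G : SimpleGraph V) (p : V → Prop)
    (hadj : ∀ u v, G.Adj u v ↔ ¬(p u ↔ p v))
    (h2 : ∀ v, ∃ w, w ≠ v ∧ (p w ↔ p v))
    (hop : ∀ v, ∃ w, ¬(p w ↔ p v)) :
    ∀ v, gEcc G v = 2 := by
  have hdist2 : ∀ u v, u ≠ v → (p u ↔ p v) → G.dist v u = 2 := by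
    intro u v hne hpp
    obtain ⟨w, hw⟩ := hop v
    have h1 : G.Adj v w := (hadj v w).2 (by tauto)
    have h2' : G.Adj w u := (hadj w u).2 (by tauto)
    have hle : G.dist v u ≤ 2 := G.dist_le (Walk.cons h1 (Walk.cons h2' Walk.nil))
    have hr : G.Reachable v u := ⟨Walk.cons h1 (Walk.cons h2' Walk.nil)⟩
    have h0 : G.dist v u ≠ 0 := fun h => hne (hr.dist_eq_zero_iff.mp h).symm
    have hne1 : G.dist v u ≠ 1 := fun h =>
      ((hadj v u).1 (dist_eq_one_iff_adj.mp h)) hpp.symm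
    omega
  intro v
  apply le_antisymm
  · apply Finset.sup_le
    intro u _
    rcases eq_or_ne u v with rfl | hne
    · rw [SimpleGraph.dist_self]; omega
    · by_cases hpp : p u ↔ p v
      · exact le_of_eq (hdist2 u v hne hpp)
      · have : G.Adj v u := (hadj v u).2 (by tauto)
        rw [dist_eq_one_iff_adj.2 this]; omega
  · obtain ⟨w, hwne, hwp⟩ := h2 v
    calc (2:ℕ) = G.dist v w := (hdist2 w v hwne hwp).symm
    _ ≤ _ := Finset.le_sup (Finset.mem_univ w)

theorem stmt4 [Fintype V] (G : SimpleGraph V) (hG : G.Connected)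
    (hbip : G.Colorable 2) :
    (∀ v : V, gEcc G v = 2) ↔
      ∃ (n m : ℕ), 2 ≤ n ∧ 2 ≤ m ∧
        Nonempty (G ≃g completeBipartiteGraph (Fin n) (Fin m)) := by
  classical
  constructor
  · intro hecc
    have hne : Nonempty V := hG.nonempty
    obtain ⟨c⟩ := hbip
    set p : V → Prop := fun v => c v = 0 with hp
    have h01 : ∀ x : Fin 2, x = 0 ∨ x = 1 := by decide
    have hfin2 : ∀ u v : V, (¬(p u ↔ p v)) ↔ c u ≠ c v := by
      intro u v
      simp only [hp]
      rcases h01 (c u) with h1 | h1 <;> rcases h01 (c v) with h2 | h2 <;>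
        rw [h1, h2] <;> decide
    -- vertices at distance exactly 2 exist from every vertex
    have hkey : ∀ v : V, ∃ w, G.dist v w = 2 := by
      intro v
      obtain ⟨w, -, hw⟩ := Finset.exists_mem_eq_sup Finset.univ
        Finset.univ_nonempty (fun u => G.dist v u)
      exact ⟨w, by rw [← hw]; exact hecc v⟩
    -- different classes implies adjacent
    have hadjA : ∀ u v : V, ¬(p u ↔ p v) → G.Adj u v := by
      intro u v hpp
      have hcne : c u ≠ c v := (hfin2 u v).1 hpp
      have huv : u ≠ v := fun h => hcne (by rw [h])
      have hle : G.dist u v ≤ 2 := by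
        rw [← hecc u]; exact Finset.le_sup (Finset.mem_univ v)
      have h0 : G.dist u v ≠ 0 := fun h =>
        huv (((hG u v).dist_eq_zero_iff).mp h)
      rcases Nat.lt_or_ge (G.dist u v) 2 with hlt | hge
      · exact dist_eq_one_iff_adj.mp (by omega)
      · exfalso
        have hd2 : G.dist u v = 2 := by omega
        obtain ⟨w, hwl⟩ := hG.exists_walk_length_eq_dist u v
        rw [hd2] at hwl
        have ha1 : G.Adj (w.getVert 0) (w.getVert 1) :=
          w.adj_getVert_succ (by omega)
        have ha2 : G.Adj (w.getVert 1) (w.getVert 2) :=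
          w.adj_getVert_succ (by omega)
        rw [w.getVert_zero] at ha1
        have hg2 : w.getVert 2 = v := by rw [← hwl]; exact w.getVert_length
        rw [hg2] at ha2
        have n1 := c.valid ha1
        have n2 := c.valid ha2
        rcases h01 (c u) with h1 | h1 <;> rcases h01 (c v) with h2 | h2 <;>
          rcases h01 (c (w.getVert 1)) with h3 | h3 <;>
          simp_all
    have hadj : ∀ u v : V, G.Adj u v ↔ ¬(p u ↔ p v) := fun u v =>
      ⟨fun h => (hfin2 u v).2 (c.valid h), hadjA u v⟩
    -- every vertex has a mate in its own class
    have hmate : ∀ v : V, ∃ w, w ≠ v ∧ (p w ↔ p v) := by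
      intro v
      obtain ⟨w, hw⟩ := hkey v
      refine ⟨w, ?_, ?_⟩
      · rintro rfl; rw [SimpleGraph.dist_self] at hw; omega
      · by_contra hpp
        have : G.Adj v w := hadjA v w (by tauto)
        rw [dist_eq_one_iff_adj.2 this] at hw; omega
    -- every vertex has a vertex in the opposite class
    have hopp : ∀ v : V, ∃ w, ¬(p w ↔ p v) := by
      intro v
      obtain ⟨w, hw⟩ := hkey v
      obtain ⟨q, hql⟩ := hG.exists_walk_length_eq_dist v w
      rw [hw] at hql
      have ha1 : G.Adj (q.getVert 0) (q.getVert 1) :=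
        q.adj_getVert_succ (by omega)
      rw [q.getVert_zero] at ha1
      exact ⟨q.getVert 1, fun h => (hadj v _).1 ha1 h.symm⟩
    have hoppA : ∀ v : V, ∃ w, ¬(p w ↔ p v) := hopp
    -- both classes are nonempty with at least two elements
    obtain ⟨v0⟩ := hne
    have hexA : ∃ a : V, p a := by
      by_cases h : p v0
      · exact ⟨v0, h⟩
      · obtain ⟨w, hw⟩ := hopp v0; exact ⟨w, by tauto⟩
    have hexB : ∃ b : V, ¬ p b := by
      by_cases h : p v0
      · obtain ⟨w, hw⟩ := hopp v0; exact ⟨w, by tauto⟩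
      · exact ⟨v0, h⟩
    obtain ⟨a, ha⟩ := hexA
    obtain ⟨b, hb⟩ := hexB
    obtain ⟨a', ha'ne, ha'⟩ := hmate a
    obtain ⟨b', hb'ne, hb'⟩ := hmate b
    refine ⟨Fintype.card {x // p x}, Fintype.card {x // ¬ p x}, ?_, ?_, ⟨?_⟩⟩
    · exact Fintype.one_lt_card_iff.mpr
        ⟨⟨a', ha'.mpr ha⟩, ⟨a, ha⟩, by simpa using ha'ne⟩
    · exact Fintype.one_lt_card_iff.mpr
        ⟨⟨b', fun h => hb (hb'.mp h)⟩, ⟨b, hb⟩, by simpa using hb'ne⟩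
    · refine ⟨((Equiv.sumCompl p).symm.trans
        (Equiv.sumCongr (Fintype.equivFin {x // p x})
          (Fintype.equivFin {x // ¬ p x}))), ?_⟩
      intro u v
      simp only [Equiv.trans_apply]
      by_cases hu : p u <;> by_cases hv : p v
      · rw [Equiv.sumCompl_symm_apply_of_pos hu,
          Equiv.sumCompl_symm_apply_of_pos hv]
        simp [hadj u v, hu, hv] <;> tauto
      · rw [Equiv.sumCompl_symm_apply_of_pos hu,
          Equiv.sumCompl_symm_apply_of_neg hv]
        simp [hadj u v, hu, hv] <;> tauto
      · rw [Equiv.sumCompl_symm_apply_of_neg hu,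
          Equiv.sumCompl_symm_apply_of_pos hv]
        simp [hadj u v, hu, hv] <;> tauto
      · rw [Equiv.sumCompl_symm_apply_of_neg hu,
          Equiv.sumCompl_symm_apply_of_neg hv]
        simp [hadj u v, hu, hv] <;> tauto
  · rintro ⟨n, m, hn, hm, ⟨φ⟩⟩
    set p : V → Prop := fun v => (φ v).isLeft = true with hp
    apply ecc_eq_two G p
    · intro u v
      rw [← φ.map_rel_iff]
      cases hu : φ u <;> cases hv : φ v <;>
        simp [hp, hu, hv, completeBipartiteGraph_adj]
    · intro v
      cases hv : φ v with
      | inl a =>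
        obtain ⟨a', ha'⟩ := Fintype.exists_ne_of_one_lt_card (by simp; omega) a
        refine ⟨φ.symm (Sum.inl a'), ?_, ?_⟩
        · intro h
          apply ha'
          have := φ.apply_symm_apply (Sum.inl a')
          rw [h, hv] at this
          exact Sum.inl.inj this.symm
        · simp [hp, hv, φ.apply_symm_apply]
      | inr b =>
        obtain ⟨b', hb'⟩ := Fintype.exists_ne_of_one_lt_card (by simp; omega) b
        refine ⟨φ.symm (Sum.inr b'), ?_, ?_⟩
        · intro h
          apply hb'
          have := φ.apply_symm_apply (Sum.inr b')
          rw [h, hv] at this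
          exact Sum.inr.inj this.symm
        · simp [hp, hv, φ.apply_symm_apply]
    · intro v
      cases hv : φ v with
      | inl a =>
        have : (0:ℕ) < m := by omega
        refine ⟨φ.symm (Sum.inr ⟨0, this⟩), ?_⟩
        simp [hp, hv, φ.apply_symm_apply]
      | inr b =>
        have : (0:ℕ) < n := by omega
        refine ⟨φ.symm (Sum.inl ⟨0, this⟩), ?_⟩
        simp [hp, hv, φ.apply_symm_apply]
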